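/- Consider walks with steps ±1 (all weights equal to 1). For m ≥ 0 let W_m(q₊,q₋,u) = ∑_w q₊^{a⁺(w)} q₋^{a⁻(w)} u^{w_m} (sum over all walks w of length m) in the Laurent polynomial ring ℤ[q₊,q₋][u,u^{−1}], let B_m(q₊,q₋) = ∑_w q₊^{a⁺(w)} q₋^{a⁻(w)} (sum over bridges of length m), let G_m(q) = ∑_w q^{a(w)} (sum over excursions of length m), and let F_m(q,u) = ∑_w q^{a(w)} u^{w_m} (sum over meanders of length m). Form the corresponding power series W(z,q₊,q₋,u), B(z,q₊,q₋), G(z,q), F(z,q,u) in z with these coefficients. Then the identity (W(z,q₊,q₋,u) + B(z,q₊,q₋)) · (G(z,q₊) + G(z,q₋) − G(z,q₊)·G(z,q₋)) = G(z,q₋)·F(z,q₊,u) + G(z,q₊)·F(z,q₋,u^{−1}) holds in (ℤ[q₊,q₋][u,u^{−1}])[[z]], where F(z,q₋,u^{−1}) denotes F(z,q₋,u) with u replaced by u^{−1}. -/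

import Mathlib

open Finset MvPolynomial

/-- The step `+1` or `-1` encoded by a boolean. -/
def stp (b : Bool) : ℤ := if b then 1 else -1

/-- The altitude `w_i` of the ±1 walk of length `m` encoded by its step
sequence `ε`. -/
def ht {m : ℕ} (ε : Fin m → Bool) (i : ℕ) : ℤ :=
  ∑ j ∈ Finset.range i, if h : j < m then stp (ε ⟨j, h⟩) else 0

/-- The positive area `a⁺(w) = ∑_{i=0}^{m} max(w_i, 0)` of a ±1 walk. -/
def aplus {m : ℕ} (ε : Fin m → Bool) : ℕ :=
  ∑ i ∈ Finset.range (m + 1), (ht ε i).toNat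

/-- The negative area `a⁻(w) = ∑_{i=0}^{m} max(-w_i, 0)` of a ±1 walk. -/
def aminus {m : ℕ} (ε : Fin m → Bool) : ℕ :=
  ∑ i ∈ Finset.range (m + 1), (-(ht ε i)).toNat

/-- The area `a(w) = ∑_{i=0}^{m} w_i` of a meander (a nonnegative integer). -/
def aexc {m : ℕ} (ε : Fin m → Bool) : ℕ :=
  (∑ i ∈ Finset.range (m + 1), ht ε i).toNat

/-- The coefficient ring `ℤ[q₊,q₋]`, with `q₊ = X 0`, `q₋ = X 1`. -/
abbrev Rq : Type := MvPolynomial (Fin 2) ℤ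

/-- The Laurent polynomial ring `ℤ[q₊,q₋][u,u⁻¹]`, with `u = T 1`. -/
abbrev Lu : Type := LaurentPolynomial Rq

/-- `W_m(q₊,q₋,u) = ∑_w q₊^{a⁺(w)} q₋^{a⁻(w)} u^{w_m}`, summed over all ±1 walks of
length `m`. -/
noncomputable def Wm (m : ℕ) : Lu :=
  ∑ ε : Fin m → Bool,
    LaurentPolynomial.C (X 0 ^ aplus ε * X 1 ^ aminus ε : Rq) *
      LaurentPolynomial.T (ht ε m)

/-- `B_m(q₊,q₋) = ∑_w q₊^{a⁺(w)} q₋^{a⁻(w)}`, summed over all bridges of length `m`. -/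
noncomputable def Bm (m : ℕ) : Rq :=
  ∑ ε : Fin m → Bool,
    if ht ε m = 0 then X 0 ^ aplus ε * X 1 ^ aminus ε else 0

/-- `G_m(q) = ∑_w q^{a(w)}`, summed over all excursions of length `m`, with `q`
taken to be the variable `X k` of `ℤ[q₊,q₋]`. -/
noncomputable def Gm (k : Fin 2) (m : ℕ) : Rq :=
  ∑ ε : Fin m → Bool,
    if (∀ i ≤ m, 0 ≤ ht ε i) ∧ ht ε m = 0 then X k ^ aexc ε else 0

/-- `F_m(q,u) = ∑_w q^{a(w)} u^{w_m}`, summed over all meanders of length `m`, with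
`q` taken to be the variable `X k` of `ℤ[q₊,q₋]`. -/
noncomputable def FmM (k : Fin 2) (m : ℕ) : Lu :=
  ∑ ε : Fin m → Bool,
    if ∀ i ≤ m, 0 ≤ ht ε i then
      LaurentPolynomial.C (X k ^ aexc ε : Rq) * LaurentPolynomial.T (ht ε m)
    else 0

/-- `F_m(q,u⁻¹) = ∑_w q^{a(w)} u^{-w_m}`, i.e. `F_m(q,u)` with `u` replaced
by `u⁻¹`. -/
noncomputable def FmMinv (k : Fin 2) (m : ℕ) : Lu :=
  ∑ ε : Fin m → Bool,
    if ∀ i ≤ m, 0 ≤ ht ε i then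
      LaurentPolynomial.C (X k ^ aexc ε : Rq) * LaurentPolynomial.T (-(ht ε m))
    else 0

set_option maxHeartbeats 1000000

/- ## splice -/

def splice {j k : ℕ} (a : Fin j → Bool) (b : Fin k → Bool) : Fin (j + k) → Bool :=
  fun i => if h : (i : ℕ) < j then a ⟨i, h⟩ else b ⟨(i : ℕ) - j, by omega⟩

lemma ht_zero {m : ℕ} (ε : Fin m → Bool) : ht ε 0 = 0 := by simp [ht]

lemma ht_step {m : ℕ} (ε : Fin m → Bool) (t : ℕ) :
    ht ε t - 1 ≤ ht ε (t + 1) ∧ ht ε (t + 1) ≤ ht ε t + 1 := by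
  unfold ht
  rw [Finset.sum_range_succ]
  split_ifs with h
  · unfold stp; split_ifs <;> omega
  · omega

lemma ht_one {m : ℕ} (ε : Fin m → Bool) (hm : 0 < m) : ht ε 1 = 1 ∨ ht ε 1 = -1 := by
  unfold ht
  rw [Finset.sum_range_one, dif_pos hm]
  unfold stp; split_ifs <;> simp

lemma ht_splice_left {j k : ℕ} (a : Fin j → Bool) (b : Fin k → Bool) {i : ℕ} (hi : i ≤ j) :
    ht (splice a b) i = ht a i := by
  unfold ht
  refine Finset.sum_congr rfl fun t htm => ?_
  rw [Finset.mem_range] at htm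
  have h1 : t < j := by omega
  rw [dif_pos h1, dif_pos (by omega : t < j + k)]
  simp [splice, h1]

lemma stp_not (x : Bool) : stp (!x) = - stp x := by cases x <;> simp [stp]

lemma ht_splice_right {j k : ℕ} (a : Fin j → Bool) (b : Fin k → Bool) (t : ℕ) :
    ht (splice a b) (j + t) = ht a j + ht b t := by
  unfold ht
  rw [Finset.sum_range_add]
  congr 1
  · refine Finset.sum_congr rfl fun s hs => ?_
    rw [Finset.mem_range] at hs
    rw [dif_pos hs, dif_pos (by omega : s < j + k)]
    simp [splice, hs]
  · refine Finset.sum_congr rfl fun s hs => ?_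
    by_cases h : s < k
    · rw [dif_pos h, dif_pos (by omega : j + s < j + k)]
      have hnj : ¬ ((j + s : ℕ) < j) := by omega
      simp only [splice, hnj, dif_neg]
      exact congrArg (fun z => stp (b z)) (Fin.ext (by simp))
    · rw [dif_neg h, dif_neg (by omega : ¬ (j + s < j + k))]

lemma sum_ht_splice {j k : ℕ} (a : Fin j → Bool) (b : Fin k → Bool)
    (h0 : ht a j = 0) (φ : ℤ → ℕ) (hφ : φ 0 = 0) :
    ∑ i ∈ Finset.range (j + k + 1), φ (ht (splice a b) i) =
      (∑ i ∈ Finset.range (j + 1), φ (ht a i)) + ∑ i ∈ Finset.range (k + 1), φ (ht b i) := by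
  have hre : j + k + 1 = (j + 1) + k := by omega
  rw [hre, Finset.sum_range_add]
  congr 1
  · exact Finset.sum_congr rfl fun i hi =>
      congrArg φ (ht_splice_left a b (by rw [Finset.mem_range] at hi; omega))
  · rw [Finset.sum_range_succ' (fun i => φ (ht b i)) k]
    rw [ht_zero, hφ, add_zero]
    refine Finset.sum_congr rfl fun s hs => ?_
    have hh : j + 1 + s = j + (s + 1) := by omega
    rw [hh, ht_splice_right, h0, zero_add]

lemma aplus_splice {j k : ℕ} {a : Fin j → Bool} {b : Fin k → Bool} (h0 : ht a j = 0) :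
    aplus (splice a b) = aplus a + aplus b :=
  sum_ht_splice a b h0 Int.toNat rfl

lemma aminus_splice {j k : ℕ} {a : Fin j → Bool} {b : Fin k → Bool} (h0 : ht a j = 0) :
    aminus (splice a b) = aminus a + aminus b :=
  sum_ht_splice a b h0 (fun x => (-x).toNat) rfl

lemma ht_splice_end {j k : ℕ} (a : Fin j → Bool) (b : Fin k → Bool) (h0 : ht a j = 0) :
    ht (splice a b) (j + k) = ht b k := by
  rw [ht_splice_right, h0, zero_add]

/- ## reflection -/

def rf {m : ℕ} (ε : Fin m → Bool) : Fin m → Bool := fun i => !(ε i)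

lemma rf_involutive {m : ℕ} : Function.Involutive (rf (m := m)) := by
  intro ε; funext i; simp [rf]

lemma ht_rf {m : ℕ} (ε : Fin m → Bool) (i : ℕ) : ht (rf ε) i = -(ht ε i) := by
  unfold ht
  rw [← Finset.sum_neg_distrib]
  refine Finset.sum_congr rfl fun t htm => ?_
  by_cases h : t < m
  · rw [dif_pos h, dif_pos h]
    exact stp_not _
  · rw [dif_neg h, dif_neg h]; simp

lemma aplus_rf {m : ℕ} (ε : Fin m → Bool) : aplus (rf ε) = aminus ε := by
  unfold aplus aminus
  exact Finset.sum_congr rfl fun i _ => by rw [ht_rf]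

lemma aminus_rf {m : ℕ} (ε : Fin m → Bool) : aminus (rf ε) = aplus ε := by
  unfold aplus aminus
  exact Finset.sum_congr rfl fun i _ => by rw [ht_rf, neg_neg]

/- ## area conversions -/

lemma aexc_eq_aplus {m : ℕ} {ε : Fin m → Bool} (h : ∀ i ≤ m, 0 ≤ ht ε i) :
    aexc ε = aplus ε := by
  unfold aexc aplus
  have : (∑ i ∈ Finset.range (m + 1), ht ε i) =
      ((∑ i ∈ Finset.range (m + 1), (ht ε i).toNat : ℕ) : ℤ) := by
    rw [Nat.cast_sum]
    refine Finset.sum_congr rfl fun i hi => ?_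
    rw [Finset.mem_range] at hi
    exact (Int.toNat_of_nonneg (h i (by omega))).symm
  rw [this, Int.toNat_natCast]

lemma aminus_eq_zero {m : ℕ} {ε : Fin m → Bool} (h : ∀ i ≤ m, 0 ≤ ht ε i) :
    aminus ε = 0 := by
  unfold aminus
  refine Finset.sum_eq_zero fun i hi => ?_
  rw [Finset.mem_range] at hi
  have := h i (by omega)
  omega

lemma aplus_eq_zero {m : ℕ} {ε : Fin m → Bool} (h : ∀ i ≤ m, ht ε i ≤ 0) :
    aplus ε = 0 := by
  unfold aplus
  refine Finset.sum_eq_zero fun i hi => ?_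
  rw [Finset.mem_range] at hi
  have := h i (by omega)
  omega

/- ## sign constancy -/

lemma sign_lemma {m : ℕ} (ε : Fin m → Bool) (r : ℕ)
    (h : ∀ t, 0 < t → t ≤ r → ht ε t ≠ 0) :
    (∀ t, 0 < t → t ≤ r → 0 < ht ε t) ∨ (∀ t, 0 < t → t ≤ r → ht ε t < 0) := by
  have key : ∀ t, 0 < t → t ≤ r → (0 < ht ε 1 → 0 < ht ε t) ∧ (ht ε 1 < 0 → ht ε t < 0) := by
    intro t
    induction t with
    | zero => omega
    | succ n ih =>
      intro _ hle
      rcases Nat.eq_zero_or_pos n with h0 | hn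
      · subst h0; exact ⟨fun h => h, fun h => h⟩
      · have h1 := ih hn (by omega)
        have hs := ht_step ε n
        have hz := h (n + 1) (by omega) hle
        have hz' := h n hn (by omega)
        constructor <;> intro hh <;> [have := h1.1 hh; have := h1.2 hh] <;> omega
  by_cases hp : 0 < ht ε 1
  · exact Or.inl fun t h1 h2 => (key t h1 h2).1 hp
  · by_cases hr : r = 0
    · exact Or.inl (by omega)
    · have h1 := h 1 one_pos (by omega)
      have hneg : ht ε 1 < 0 := by omega
      exact Or.inr fun t ht1 ht2 => (key t ht1 ht2).2 hneg

def spliceEquiv (j k : ℕ) : ((Fin j → Bool) × (Fin k → Bool)) ≃ (Fin (j + k) → Bool) where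
  toFun p := splice p.1 p.2
  invFun ε := (fun i => ε ⟨i, by omega⟩, fun i => ε ⟨j + i, by omega⟩)
  left_inv p := by
    ext i
    · simp [splice]
    · have h : ¬ ((j + (i : ℕ)) < j) := by omega
      simp only [splice, h, dif_neg]
      exact congrArg p.2 (Fin.ext (by simp))
  right_inv ε := by
    funext i
    by_cases h : (i : ℕ) < j
    · simp only [splice, h, dif_pos]
    · simp only [splice, h, dif_neg]
      exact congrArg ε (Fin.ext (by simp; omega))

lemma sum_splice {j k : ℕ} {M : Type*} [AddCommMonoid M] (f : (Fin (j + k) → Bool) → M) :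
    ∑ a : Fin j → Bool, ∑ b : Fin k → Bool, f (splice a b) = ∑ ε : Fin (j + k) → Bool, f ε := by
  rw [← Equiv.sum_comp (spliceEquiv j k) f, Fintype.sum_prod_type]
  rfl

/-- The master "split a walk at a canonical zero" convolution lemma. -/
lemma master (F G H : ∀ n : ℕ, (Fin n → Bool) → Lu) (σ : ∀ n : ℕ, (Fin n → Bool) → ℕ) (m : ℕ)
    (hσ : ∀ ε : Fin m → Bool, σ m ε ≤ m)
    (hH : ∀ j k : ℕ, j + k = m → ∀ (a : Fin j → Bool) (b : Fin k → Bool),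
      G j a * H k b =
        if σ (j + k) (splice a b) = j then F (j + k) (splice a b) else 0) :
    (∑ ε : Fin m → Bool, F m ε) =
      ∑ p ∈ Finset.HasAntidiagonal.antidiagonal m,
        (∑ a : Fin p.1 → Bool, G p.1 a) * (∑ b : Fin p.2 → Bool, H p.2 b) := by
  have key : ∀ j k : ℕ, j + k = m →
      (∑ a : Fin j → Bool, G j a) * (∑ b : Fin k → Bool, H k b)
        = ∑ ε : Fin m → Bool, if σ m ε = j then F m ε else 0 := by
    intro j k hjk
    subst hjk
    rw [Finset.sum_mul_sum]
    calc ∑ a : Fin j → Bool, ∑ b : Fin k → Bool, G j a * H k b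
        = ∑ a : Fin j → Bool, ∑ b : Fin k → Bool,
            (fun ε => if σ (j + k) ε = j then F (j + k) ε else 0) (splice a b) := by
          refine Finset.sum_congr rfl fun a _ => Finset.sum_congr rfl fun b _ => ?_
          exact hH j k rfl a b
      _ = ∑ ε : Fin (j + k) → Bool, if σ (j + k) ε = j then F (j + k) ε else 0 :=
          sum_splice (fun ε => if σ (j + k) ε = j then F (j + k) ε else 0)
  calc (∑ ε : Fin m → Bool, F m ε)
      = ∑ ε : Fin m → Bool, ∑ p ∈ Finset.HasAntidiagonal.antidiagonal m,
          if σ m ε = p.1 then F m ε else 0 := by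
        refine Finset.sum_congr rfl fun ε _ => ?_
        rw [Finset.sum_eq_single (σ m ε, m - σ m ε)]
        · rw [if_pos rfl]
        · rintro ⟨x, y⟩ hb hne
          rw [Finset.HasAntidiagonal.mem_antidiagonal] at hb
          by_cases hx : σ m ε = x
          · exfalso; apply hne; subst hx; simp at hb ⊢; omega
          · rw [if_neg hx]
        · intro hnot
          exfalso
          apply hnot
          rw [Finset.HasAntidiagonal.mem_antidiagonal]
          have := hσ ε
          omega
    _ = ∑ p ∈ Finset.HasAntidiagonal.antidiagonal m, ∑ ε : Fin m → Bool,
          if σ m ε = p.1 then F m ε else 0 := Finset.sum_comm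
    _ = _ := by
        refine Finset.sum_congr rfl fun p hp => ?_
        rw [Finset.HasAntidiagonal.mem_antidiagonal] at hp
        exact (key p.1 p.2 hp).symm

/- ## weights -/

open LaurentPolynomial in
noncomputable def wW (n : ℕ) (ε : Fin n → Bool) : Lu :=
  LaurentPolynomial.C (X 0 ^ aplus ε * X 1 ^ aminus ε : Rq) * T (ht ε n)

open LaurentPolynomial in
noncomputable def wB (n : ℕ) (ε : Fin n → Bool) : Lu :=
  if ht ε n = 0 then LaurentPolynomial.C (X 0 ^ aplus ε * X 1 ^ aminus ε : Rq) else 0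

open LaurentPolynomial in
noncomputable def wS (n : ℕ) (ε : Fin n → Bool) : Lu :=
  if ∀ i ≤ n, 0 < i → ht ε i ≠ 0 then wW n ε else 0

open LaurentPolynomial in
noncomputable def wTl (k : Fin 2) (c : ℤ) (n : ℕ) (ε : Fin n → Bool) : Lu :=
  if ∀ i ≤ n, 0 < i → 0 < ht ε i then
    LaurentPolynomial.C (X k ^ aplus ε : Rq) * T (c * ht ε n) else 0

open LaurentPolynomial in
noncomputable def wMe (k : Fin 2) (c : ℤ) (n : ℕ) (ε : Fin n → Bool) : Lu :=
  if ∀ i ≤ n, 0 ≤ ht ε i then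
    LaurentPolynomial.C (X k ^ aplus ε : Rq) * T (c * ht ε n) else 0

noncomputable def wEx (k : Fin 2) (n : ℕ) (ε : Fin n → Bool) : Lu :=
  if (∀ i ≤ n, 0 ≤ ht ε i) ∧ ht ε n = 0 then
    LaurentPolynomial.C (X k ^ aplus ε : Rq) else 0

noncomputable def wAr (n : ℕ) (ε : Fin n → Bool) : Lu :=
  if 0 < n ∧ ht ε n = 0 ∧ ∀ i ≤ n, 0 < i → i < n → ht ε i ≠ 0 then
    LaurentPolynomial.C (X 0 ^ aplus ε * X 1 ^ aminus ε : Rq) else 0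

noncomputable def wPA (k : Fin 2) (n : ℕ) (ε : Fin n → Bool) : Lu :=
  if 0 < n ∧ ht ε n = 0 ∧ ∀ i ≤ n, 0 < i → i < n → 0 < ht ε i then
    LaurentPolynomial.C (X k ^ aplus ε : Rq) else 0

def lz (n : ℕ) (ε : Fin n → Bool) : ℕ := Nat.findGreatest (fun i => ht ε i = 0) n

def lz' (n : ℕ) (ε : Fin n → Bool) : ℕ := Nat.findGreatest (fun i => ht ε i = 0) (n - 1)

/- ## split point lemmas -/

section
variable {j k : ℕ} {a : Fin j → Bool} {b : Fin k → Bool}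

lemma lz_splice (h0 : ht a j = 0) (hb : ∀ t ≤ k, 0 < t → ht b t ≠ 0) :
    lz (j + k) (splice a b) = j := by
  rw [lz, Nat.findGreatest_eq_iff]
  refine ⟨by omega, fun _ => by rw [ht_splice_left a b le_rfl]; exact h0, fun t h1 h2 => ?_⟩
  have ht' : t = j + (t - j) := by omega
  rw [ht', ht_splice_right, h0, zero_add]
  exact hb (t - j) (by omega) (by omega)

lemma lz_extract (h : lz (j + k) (splice a b) = j) :
    ht a j = 0 ∧ ∀ t ≤ k, 0 < t → ht b t ≠ 0 := by
  rw [lz, Nat.findGreatest_eq_iff] at h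
  have h0 : ht a j = 0 := by
    rcases Nat.eq_zero_or_pos j with hj | hj
    · subst hj; exact ht_zero a
    · have := h.2.1 (by omega); rwa [ht_splice_left a b le_rfl] at this
  refine ⟨h0, fun t h1 h2 => ?_⟩
  have h3 := h.2.2 (show j < j + t by omega) (by omega)
  rwa [ht_splice_right, h0, zero_add] at h3

lemma lz'_splice (hk : 0 < k) (h0 : ht a j = 0)
    (hb : ∀ t ≤ k, 0 < t → t < k → ht b t ≠ 0) :
    lz' (j + k) (splice a b) = j := by
  rw [lz', Nat.findGreatest_eq_iff]
  refine ⟨by omega, fun _ => by rw [ht_splice_left a b le_rfl]; exact h0, fun t h1 h2 => ?_⟩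
  have ht' : t = j + (t - j) := by omega
  rw [ht', ht_splice_right, h0, zero_add]
  exact hb (t - j) (by omega) (by omega) (by omega)

lemma lz'_extract (hm : 0 < j + k) (h : lz' (j + k) (splice a b) = j) :
    0 < k ∧ ht a j = 0 ∧ ∀ t ≤ k, 0 < t → t < k → ht b t ≠ 0 := by
  rw [lz', Nat.findGreatest_eq_iff] at h
  have hk : 0 < k := by omega
  have h0 : ht a j = 0 := by
    rcases Nat.eq_zero_or_pos j with hj | hj
    · subst hj; exact ht_zero a
    · have := h.2.1 (by omega); rwa [ht_splice_left a b le_rfl] at this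
  refine ⟨hk, h0, fun t h1 h2 h3 => ?_⟩
  have h4 := h.2.2 (show j < j + t by omega) (by omega)
  rwa [ht_splice_right, h0, zero_add] at h4

lemma pos_splice (h0 : ht a j = 0) (ha : ∀ i ≤ j, 0 ≤ ht a i) (hb : ∀ t ≤ k, 0 ≤ ht b t) :
    ∀ i ≤ j + k, 0 ≤ ht (splice a b) i := by
  intro i hi
  by_cases h : i ≤ j
  · rw [ht_splice_left a b h]; exact ha i h
  · have ht' : i = j + (i - j) := by omega
    rw [ht', ht_splice_right, h0, zero_add]
    exact hb (i - j) (by omega)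

lemma pos_left (h : ∀ i ≤ j + k, 0 ≤ ht (splice a b) i) : ∀ i ≤ j, 0 ≤ ht a i := by
  intro i hi
  have := h i (by omega)
  rwa [ht_splice_left a b hi] at this

lemma pos_right (h0 : ht a j = 0) (h : ∀ i ≤ j + k, 0 ≤ ht (splice a b) i) :
    ∀ t ≤ k, 0 ≤ ht b t := by
  intro t htk
  have := h (j + t) (by omega)
  rwa [ht_splice_right, h0, zero_add] at this

end

/- ## weight multiplication helpers -/

lemma CT_mul (x y : Rq) (e f : ℤ) :
    (LaurentPolynomial.C x * LaurentPolynomial.T e) *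
      (LaurentPolynomial.C y * LaurentPolynomial.T f) =
    LaurentPolynomial.C (x * y) * LaurentPolynomial.T (e + f) := by
  rw [map_mul, LaurentPolynomial.T_add]; ring

lemma C_mul' (x y : Rq) :
    (LaurentPolynomial.C x : Lu) * LaurentPolynomial.C y = LaurentPolynomial.C (x * y) :=
  (map_mul _ _ _).symm

/- ## instance M1 : walks = bridges * sign-constant tails -/

lemma M1 (m : ℕ) :
    (∑ ε : Fin m → Bool, wW m ε) =
      ∑ p ∈ Finset.HasAntidiagonal.antidiagonal m,
        (∑ a : Fin p.1 → Bool, wB p.1 a) * (∑ b : Fin p.2 → Bool, wS p.2 b) := by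
  refine master wW wB wS lz m (fun ε => Nat.findGreatest_le _) ?_
  intro j k hjk a b
  by_cases hc : ht a j = 0 ∧ ∀ t ≤ k, 0 < t → ht b t ≠ 0
  · obtain ⟨h0, hb⟩ := hc
    rw [lz_splice h0 hb, if_pos rfl]
    unfold wB wS wW
    rw [if_pos h0, if_pos hb, ht_splice_end a b h0, aplus_splice h0, aminus_splice h0,
      pow_add, pow_add, ← mul_assoc, C_mul']
    congr 2
    ring
  · have hL : wB j a * wS k b = 0 := by
      unfold wB wS
      by_cases h0 : ht a j = 0
      · rw [if_neg fun h => hc ⟨h0, h⟩, mul_zero]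
      · rw [if_neg h0, zero_mul]
    rw [hL]
    by_cases hσ : lz (j + k) (splice a b) = j
    · exact absurd (lz_extract hσ) hc
    · rw [if_neg hσ]

/- ## instance M2 : meanders = excursions * positive tails -/

lemma M2 (k' : Fin 2) (c : ℤ) (m : ℕ) :
    (∑ ε : Fin m → Bool, wMe k' c m ε) =
      ∑ p ∈ Finset.HasAntidiagonal.antidiagonal m,
        (∑ a : Fin p.1 → Bool, wEx k' p.1 a) * (∑ b : Fin p.2 → Bool, wTl k' c p.2 b) := by
  refine master (wMe k' c) (wEx k') (wTl k' c) lz m (fun ε => Nat.findGreatest_le _) ?_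
  intro j k hjk a b
  by_cases hc : ((∀ i ≤ j, 0 ≤ ht a i) ∧ ht a j = 0) ∧ ∀ t ≤ k, 0 < t → 0 < ht b t
  · obtain ⟨⟨hpa, h0⟩, hb⟩ := hc
    have hb' : ∀ t ≤ k, 0 < t → ht b t ≠ 0 := fun t h1 h2 => (hb t h1 h2).ne'
    rw [lz_splice h0 hb', if_pos rfl]
    unfold wEx wTl wMe
    rw [if_pos ⟨hpa, h0⟩, if_pos hb,
      if_pos (pos_splice h0 hpa fun t h1 => by
        rcases Nat.eq_zero_or_pos t with h | h
        · subst h; rw [ht_zero]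
        · exact le_of_lt (hb t h1 h)),
      ht_splice_end a b h0, aplus_splice h0, pow_add, ← mul_assoc, C_mul']
  · have hL : wEx k' j a * wTl k' c k b = 0 := by
      unfold wEx wTl
      by_cases h0 : (∀ i ≤ j, 0 ≤ ht a i) ∧ ht a j = 0
      · rw [if_neg fun h => hc ⟨h0, h⟩, mul_zero]
      · rw [if_neg h0, zero_mul]
    rw [hL]
    by_cases hσ : lz (j + k) (splice a b) = j
    · rw [if_pos hσ]
      unfold wMe
      by_cases hm : ∀ i ≤ j + k, 0 ≤ ht (splice a b) i
      · exfalso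
        obtain ⟨h0, hb⟩ := lz_extract hσ
        exact hc ⟨⟨pos_left hm, h0⟩, fun t h1 h2 =>
          lt_of_le_of_ne (pos_right h0 hm t h1) (Ne.symm (hb t h1 h2))⟩
      · rw [if_neg hm]
    · rw [if_neg hσ]

/- ## instance M3 : bridges = bridges * arches -/

lemma M3 {m : ℕ} (hm : 0 < m) :
    (∑ ε : Fin m → Bool, wB m ε) =
      ∑ p ∈ Finset.HasAntidiagonal.antidiagonal m,
        (∑ a : Fin p.1 → Bool, wB p.1 a) * (∑ b : Fin p.2 → Bool, wAr p.2 b) := by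
  refine master wB wB wAr lz' m (fun ε => le_trans (Nat.findGreatest_le _) (by omega)) ?_
  intro j k hjk a b
  by_cases hc : ht a j = 0 ∧ (0 < k ∧ ht b k = 0 ∧ ∀ i ≤ k, 0 < i → i < k → ht b i ≠ 0)
  · obtain ⟨h0, hk, hbk, hb⟩ := hc
    rw [lz'_splice hk h0 hb, if_pos rfl]
    unfold wB wAr
    rw [if_pos h0, if_pos ⟨hk, hbk, hb⟩, if_pos (by rw [ht_splice_end a b h0]; exact hbk),
      aplus_splice h0, aminus_splice h0, pow_add, pow_add, C_mul']
    congr 1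
    ring
  · have hL : wB j a * wAr k b = 0 := by
      unfold wB wAr
      by_cases h0 : ht a j = 0
      · rw [if_neg fun h => hc ⟨h0, h⟩, mul_zero]
      · rw [if_neg h0, zero_mul]
    rw [hL]
    by_cases hσ : lz' (j + k) (splice a b) = j
    · rw [if_pos hσ]
      unfold wB
      by_cases hbr : ht (splice a b) (j + k) = 0
      · exfalso
        obtain ⟨hk, h0, hb⟩ := lz'_extract (by omega) hσ
        rw [ht_splice_right, h0, zero_add] at hbr
        exact hc ⟨h0, hk, hbr, hb⟩
      · rw [if_neg hbr]
    · rw [if_neg hσ]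

/- ## instance M4 : excursions = excursions * positive arches -/

lemma M4 (k' : Fin 2) {m : ℕ} (hm : 0 < m) :
    (∑ ε : Fin m → Bool, wEx k' m ε) =
      ∑ p ∈ Finset.HasAntidiagonal.antidiagonal m,
        (∑ a : Fin p.1 → Bool, wEx k' p.1 a) * (∑ b : Fin p.2 → Bool, wPA k' p.2 b) := by
  refine master (wEx k') (wEx k') (wPA k') lz' m
    (fun ε => le_trans (Nat.findGreatest_le _) (by omega)) ?_
  intro j k hjk a b
  by_cases hc : ((∀ i ≤ j, 0 ≤ ht a i) ∧ ht a j = 0) ∧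
      (0 < k ∧ ht b k = 0 ∧ ∀ i ≤ k, 0 < i → i < k → 0 < ht b i)
  · obtain ⟨⟨hpa, h0⟩, hk, hbk, hb⟩ := hc
    have hb' : ∀ t ≤ k, 0 < t → t < k → ht b t ≠ 0 := fun t h1 h2 h3 => (hb t h1 h2 h3).ne'
    rw [lz'_splice hk h0 hb', if_pos rfl]
    unfold wEx wPA
    have hposb : ∀ t ≤ k, 0 ≤ ht b t := by
      intro t htk
      rcases Nat.eq_zero_or_pos t with h | h
      · subst h; rw [ht_zero]
      · rcases Nat.lt_or_ge t k with h2 | h2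
        · exact le_of_lt (hb t htk h h2)
        · have : t = k := by omega
          rw [this, hbk]
    rw [if_pos ⟨hpa, h0⟩, if_pos ⟨hk, hbk, hb⟩,
      if_pos ⟨pos_splice h0 hpa hposb, by rw [ht_splice_end a b h0]; exact hbk⟩,
      aplus_splice h0, pow_add, C_mul']
  · have hL : wEx k' j a * wPA k' k b = 0 := by
      unfold wEx wPA
      by_cases h0 : (∀ i ≤ j, 0 ≤ ht a i) ∧ ht a j = 0
      · rw [if_neg fun h => hc ⟨h0, h⟩, mul_zero]
      · rw [if_neg h0, zero_mul]
    rw [hL]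
    by_cases hσ : lz' (j + k) (splice a b) = j
    · rw [if_pos hσ]
      unfold wEx
      by_cases hex : (∀ i ≤ j + k, 0 ≤ ht (splice a b) i) ∧ ht (splice a b) (j + k) = 0
      · exfalso
        obtain ⟨hk, h0, hb⟩ := lz'_extract (by omega) hσ
        have hbk : ht b k = 0 := by
          have := hex.2
          rwa [ht_splice_right, h0, zero_add] at this
        exact hc ⟨⟨pos_left hex.1, h0⟩, hk, hbk, fun t h1 h2 h3 =>
          lt_of_le_of_ne (pos_right h0 hex.1 t h1) (Ne.symm (hb t h1 h2 h3))⟩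
      · rw [if_neg hex]
    · rw [if_neg hσ]

/- ## reflection sums -/

lemma sum_rf {m : ℕ} (f : (Fin m → Bool) → Lu) :
    ∑ ε : Fin m → Bool, f ε = ∑ ε : Fin m → Bool, f (rf ε) :=
  (Equiv.sum_comp (rf_involutive (m := m)).toPerm f).symm

/- ## D1 : sign-constant tails split -/

lemma D1 {m : ℕ} (hm : 0 < m) :
    (∑ ε : Fin m → Bool, wS m ε) =
      (∑ ε : Fin m → Bool, wTl 0 1 m ε) + ∑ ε : Fin m → Bool, wTl 1 (-1) m ε := by
  rw [sum_rf (wTl 1 (-1) m), ← Finset.sum_add_distrib]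
  refine Finset.sum_congr rfl fun ε _ => ?_
  unfold wS wTl wW
  by_cases hNZ : ∀ i ≤ m, 0 < i → ht ε i ≠ 0
  · rw [if_pos hNZ]
    rcases sign_lemma ε m (fun t h1 h2 => hNZ t h2 h1) with hpos | hneg
    · have hnn : ∀ i ≤ m, 0 ≤ ht ε i := by
        intro i hi
        rcases Nat.eq_zero_or_pos i with h | h
        · subst h; rw [ht_zero]
        · exact le_of_lt (hpos i h hi)
      rw [if_pos fun i hi h0 => hpos i h0 hi,
        if_neg (fun hng : ∀ i ≤ m, 0 < i → 0 < ht (rf ε) i => by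
          have h1 := hng 1 hm one_pos
          rw [ht_rf] at h1
          have h2 := hpos 1 one_pos hm
          omega), add_zero, aminus_eq_zero hnn, pow_zero, mul_one, one_mul]
    · have hnp : ∀ i ≤ m, ht ε i ≤ 0 := by
        intro i hi
        rcases Nat.eq_zero_or_pos i with h | h
        · subst h; rw [ht_zero]
        · exact le_of_lt (hneg i h hi)
      rw [if_neg (fun hpg : ∀ i ≤ m, 0 < i → 0 < ht ε i => by
          have h1 := hpg 1 hm one_pos
          have h2 := hneg 1 one_pos hm
          omega),
        if_pos (fun i hi h0 => by rw [ht_rf]; have := hneg i h0 hi; omega), zero_add,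
        aplus_eq_zero hnp, pow_zero, one_mul, aplus_rf, ht_rf, neg_mul, one_mul, neg_neg]
  · rw [if_neg hNZ,
      if_neg (fun hp : ∀ i ≤ m, 0 < i → 0 < ht ε i =>
        hNZ fun i hi h0 => (hp i hi h0).ne'),
      if_neg (fun hn : ∀ i ≤ m, 0 < i → 0 < ht (rf ε) i => by
        apply hNZ
        intro i hi h0
        have := hn i hi h0
        rw [ht_rf] at this
        omega), add_zero]

/- ## D2 : arch sign split -/

lemma D2 (m : ℕ) :
    (∑ ε : Fin m → Bool, wAr m ε) =
      (∑ ε : Fin m → Bool, wPA 0 m ε) + ∑ ε : Fin m → Bool, wPA 1 m ε := by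
  rw [sum_rf (wPA 1 m), ← Finset.sum_add_distrib]
  refine Finset.sum_congr rfl fun ε _ => ?_
  unfold wAr wPA
  by_cases hAr : 0 < m ∧ ht ε m = 0 ∧ ∀ i ≤ m, 0 < i → i < m → ht ε i ≠ 0
  · obtain ⟨hm, hme, hint⟩ := hAr
    have hm2 : 2 ≤ m := by
      rcases Nat.lt_or_ge m 2 with h | h
      · interval_cases m
        rcases ht_one ε hm with h1 | h1 <;> rw [h1] at hme <;> omega
      · exact h
    have h1nz : ht ε 1 ≠ 0 := hint 1 (by omega) one_pos (by omega)
    rw [if_pos ⟨hm, hme, hint⟩]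
    rcases sign_lemma ε (m - 1) (fun t ht1 ht2 => hint t (by omega) ht1 (by omega)) with hpos | hneg
    · have hnn : ∀ i ≤ m, 0 ≤ ht ε i := by
        intro i hi
        rcases Nat.eq_zero_or_pos i with h | h
        · subst h; rw [ht_zero]
        · rcases Nat.lt_or_ge i m with h2 | h2
          · exact le_of_lt (hpos i h (by omega))
          · have : i = m := by omega
            rw [this, hme]
      rw [if_pos ⟨hm, hme, fun i hi h0 hiltm => hpos i h0 (by omega)⟩,
        if_neg (fun hng : 0 < m ∧ ht (rf ε) m = 0 ∧
            ∀ i ≤ m, 0 < i → i < m → 0 < ht (rf ε) i => by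
          have h1 := hng.2.2 1 (by omega) one_pos (by omega)
          rw [ht_rf] at h1
          have h2 := hpos 1 one_pos (by omega)
          omega), add_zero, aminus_eq_zero hnn, pow_zero, mul_one]
    · have hnp : ∀ i ≤ m, ht ε i ≤ 0 := by
        intro i hi
        rcases Nat.eq_zero_or_pos i with h | h
        · subst h; rw [ht_zero]
        · rcases Nat.lt_or_ge i m with h2 | h2
          · exact le_of_lt (hneg i h (by omega))
          · have : i = m := by omega
            rw [this, hme]
      rw [if_neg (fun hpg : 0 < m ∧ ht ε m = 0 ∧ ∀ i ≤ m, 0 < i → i < m → 0 < ht ε i => by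
          have h1 := hpg.2.2 1 (by omega) one_pos (by omega)
          have h2 := hneg 1 one_pos (by omega)
          omega),
        if_pos ⟨hm, by rw [ht_rf, hme, neg_zero], fun i hi h0 hiltm => by
          rw [ht_rf]
          have := hneg i h0 (by omega)
          omega⟩, zero_add, aplus_eq_zero hnp, pow_zero, one_mul, aplus_rf]
  · rw [if_neg hAr,
      if_neg (fun hp : 0 < m ∧ ht ε m = 0 ∧ ∀ i ≤ m, 0 < i → i < m → 0 < ht ε i =>
        hAr ⟨hp.1, hp.2.1, fun i hi h0 h2 => (hp.2.2 i hi h0 h2).ne'⟩),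
      if_neg (fun hn : 0 < m ∧ ht (rf ε) m = 0 ∧
          ∀ i ≤ m, 0 < i → i < m → 0 < ht (rf ε) i => by
        apply hAr
        refine ⟨hn.1, by have := hn.2.1; rwa [ht_rf, neg_eq_zero] at this,
          fun i hi h0 h2 => ?_⟩
        have := hn.2.2 i hi h0 h2
        rw [ht_rf] at this
        omega), add_zero]

/- ## base values at length 0 -/

lemma wB0 : (∑ ε : Fin 0 → Bool, wB 0 ε) = 1 := by
  rw [Fintype.sum_unique]
  unfold wB
  rw [if_pos (ht_zero _)]
  simp [aplus, aminus, ht]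

lemma wEx0 (k : Fin 2) : (∑ ε : Fin 0 → Bool, wEx k 0 ε) = 1 := by
  rw [Fintype.sum_unique]
  unfold wEx
  rw [if_pos ⟨fun i hi => by interval_cases i; rw [ht_zero], ht_zero _⟩]
  simp [aplus, ht]

lemma wS0 : (∑ ε : Fin 0 → Bool, wS 0 ε) = 1 := by
  rw [Fintype.sum_unique]
  unfold wS wW
  rw [if_pos (fun i hi h0 => by omega)]
  simp [aplus, aminus, ht, LaurentPolynomial.T_zero]

lemma wTl0 (k : Fin 2) (c : ℤ) : (∑ ε : Fin 0 → Bool, wTl k c 0 ε) = 1 := by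
  rw [Fintype.sum_unique]
  unfold wTl
  rw [if_pos (fun i hi h0 => by omega)]
  simp [aplus, ht, LaurentPolynomial.T_zero]

lemma wAr0 : (∑ ε : Fin 0 → Bool, wAr 0 ε) = 0 := by
  rw [Fintype.sum_unique]
  unfold wAr
  rw [if_neg fun h => absurd h.1 (by omega)]

lemma wPA0 (k : Fin 2) : (∑ ε : Fin 0 → Bool, wPA k 0 ε) = 0 := by
  rw [Fintype.sum_unique]
  unfold wPA
  rw [if_neg fun h => absurd h.1 (by omega)]

/- ## power series -/

noncomputable def SW : PowerSeries Lu := PowerSeries.mk fun m => ∑ ε : Fin m → Bool, wW m ε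
noncomputable def Sb : PowerSeries Lu := PowerSeries.mk fun m => ∑ ε : Fin m → Bool, wB m ε
noncomputable def SS : PowerSeries Lu := PowerSeries.mk fun m => ∑ ε : Fin m → Bool, wS m ε
noncomputable def STl (k : Fin 2) (c : ℤ) : PowerSeries Lu :=
  PowerSeries.mk fun m => ∑ ε : Fin m → Bool, wTl k c m ε
noncomputable def SMe (k : Fin 2) (c : ℤ) : PowerSeries Lu :=
  PowerSeries.mk fun m => ∑ ε : Fin m → Bool, wMe k c m ε
noncomputable def SEx (k : Fin 2) : PowerSeries Lu :=
  PowerSeries.mk fun m => ∑ ε : Fin m → Bool, wEx k m ε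
noncomputable def SAr : PowerSeries Lu := PowerSeries.mk fun m => ∑ ε : Fin m → Bool, wAr m ε
noncomputable def SPA (k : Fin 2) : PowerSeries Lu :=
  PowerSeries.mk fun m => ∑ ε : Fin m → Bool, wPA k m ε

lemma E1 : SW = Sb * SS := by
  refine PowerSeries.ext fun n => ?_
  rw [PowerSeries.coeff_mul]
  simp only [SW, Sb, SS, PowerSeries.coeff_mk]
  exact M1 n

lemma E2 (k : Fin 2) (c : ℤ) : SMe k c = SEx k * STl k c := by
  refine PowerSeries.ext fun n => ?_
  rw [PowerSeries.coeff_mul]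
  simp only [SMe, SEx, STl, PowerSeries.coeff_mk]
  exact M2 k c n

lemma E6 : SAr = SPA 0 + SPA 1 := by
  refine PowerSeries.ext fun n => ?_
  rw [map_add]
  simp only [SAr, SPA, PowerSeries.coeff_mk]
  exact D2 n

lemma E3 : Sb = 1 + Sb * SAr := by
  refine PowerSeries.ext fun n => ?_
  rw [map_add, PowerSeries.coeff_one, PowerSeries.coeff_mul]
  simp only [Sb, SAr, PowerSeries.coeff_mk]
  rcases Nat.eq_zero_or_pos n with h | h
  · subst h
    rw [if_pos rfl, wB0, Finset.Nat.antidiagonal_zero, Finset.sum_singleton]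
    rw [wB0, wAr0, mul_zero, add_zero]
  · rw [if_neg (by omega), zero_add]
    exact M3 h

lemma E4 (k : Fin 2) : SEx k = 1 + SEx k * SPA k := by
  refine PowerSeries.ext fun n => ?_
  rw [map_add, PowerSeries.coeff_one, PowerSeries.coeff_mul]
  simp only [SEx, SPA, PowerSeries.coeff_mk]
  rcases Nat.eq_zero_or_pos n with h | h
  · subst h
    rw [if_pos rfl, wEx0, Finset.Nat.antidiagonal_zero, Finset.sum_singleton]
    rw [wEx0, wPA0, mul_zero, add_zero]
  · rw [if_neg (by omega), zero_add]
    exact M4 k h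

lemma E5 : SS = STl 0 1 + STl 1 (-1) - 1 := by
  refine PowerSeries.ext fun n => ?_
  rw [map_sub, map_add, PowerSeries.coeff_one]
  simp only [SS, STl, PowerSeries.coeff_mk]
  rcases Nat.eq_zero_or_pos n with h | h
  · subst h
    rw [if_pos rfl, wS0, wTl0, wTl0]
    norm_num
  · rw [if_neg (by omega), sub_zero]
    exact D1 h

lemma TW : PowerSeries.mk Wm = SW := rfl

lemma TB : PowerSeries.mk (fun m => (LaurentPolynomial.C (Bm m) : Lu)) = Sb := by
  refine PowerSeries.ext fun n => ?_
  simp only [Sb, PowerSeries.coeff_mk]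
  rw [Bm, map_sum]
  refine Finset.sum_congr rfl fun ε _ => ?_
  rw [apply_ite (⇑(LaurentPolynomial.C : Rq →+* Lu)), map_zero]
  rfl

lemma TG (k : Fin 2) :
    PowerSeries.mk (fun m => (LaurentPolynomial.C (Gm k m) : Lu)) = SEx k := by
  refine PowerSeries.ext fun n => ?_
  simp only [SEx, PowerSeries.coeff_mk]
  rw [Gm, map_sum]
  refine Finset.sum_congr rfl fun ε _ => ?_
  rw [apply_ite (⇑(LaurentPolynomial.C : Rq →+* Lu)), map_zero]
  unfold wEx
  by_cases h : (∀ i ≤ n, 0 ≤ ht ε i) ∧ ht ε n = 0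
  · rw [if_pos h, if_pos h, aexc_eq_aplus h.1]
  · rw [if_neg h, if_neg h]

lemma TF : PowerSeries.mk (FmM 0) = SMe 0 1 := by
  refine PowerSeries.ext fun n => ?_
  simp only [SMe, PowerSeries.coeff_mk]
  rw [FmM]
  refine Finset.sum_congr rfl fun ε _ => ?_
  unfold wMe
  by_cases h : ∀ i ≤ n, 0 ≤ ht ε i
  · rw [if_pos h, if_pos h, aexc_eq_aplus h, one_mul]
  · rw [if_neg h, if_neg h]

lemma TFi : PowerSeries.mk (FmMinv 1) = SMe 1 (-1) := by
  refine PowerSeries.ext fun n => ?_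
  simp only [SMe, PowerSeries.coeff_mk]
  rw [FmMinv]
  refine Finset.sum_congr rfl fun ε _ => ?_
  unfold wMe
  by_cases h : ∀ i ≤ n, 0 ≤ ht ε i
  · rw [if_pos h, if_pos h, aexc_eq_aplus h, neg_one_mul]
  · rw [if_neg h, if_neg h]


/-- the walk decomposition identity
`(W(z,q₊,q₋,u) + B(z,q₊,q₋))·(G(z,q₊) + G(z,q₋) − G(z,q₊)·G(z,q₋))
  = G(z,q₋)·F(z,q₊,u) + G(z,q₊)·F(z,q₋,u⁻¹)`
in `(ℤ[q₊,q₋][u,u⁻¹])[[z]]`. -/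
theorem walk_decomposition :
    (PowerSeries.mk Wm +
        PowerSeries.mk (fun m => (LaurentPolynomial.C (Bm m) : Lu))) *
      (PowerSeries.mk (fun m => (LaurentPolynomial.C (Gm 0 m) : Lu)) +
        PowerSeries.mk (fun m => (LaurentPolynomial.C (Gm 1 m) : Lu)) -
        PowerSeries.mk (fun m => (LaurentPolynomial.C (Gm 0 m) : Lu)) *
          PowerSeries.mk (fun m => (LaurentPolynomial.C (Gm 1 m) : Lu))) =
    PowerSeries.mk (fun m => (LaurentPolynomial.C (Gm 1 m) : Lu)) *
        PowerSeries.mk (FmM 0) +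
      PowerSeries.mk (fun m => (LaurentPolynomial.C (Gm 0 m) : Lu)) *
        PowerSeries.mk (FmMinv 1) := by
  rw [TW, TB, TG 0, TG 1, TF, TFi]
  have h5 : Sb = 1 + Sb * (SPA 0 + SPA 1) := by rw [← E6]; exact E3
  have h6 := E4 0
  have h7 := E4 1
  rw [E1, E5, E2 0 1, E2 1 (-1)]
  linear_combination
    ((STl 0 1 + STl 1 (-1)) * (SEx 0 * SEx 1)) * h5 -
      ((STl 0 1 + STl 1 (-1)) * Sb * SEx 0) * h7 -
      ((STl 0 1 + STl 1 (-1)) * Sb * SEx 1) * h6
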